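/- Let d ∈ ℕ, 2 ≤ p < ∞ and 0 < θ ≤ 1. Then the Besov space of dominating mixed smoothness 𝐁^{1/θ−1/2}_{p,θ} embeds into the Wiener space 𝒜_θ with embedding constant 1 (independently of d): for every f ∈ 𝐁^{1/θ−1/2}_{p,θ}(𝕋^d) it holds ‖f‖_{𝒜_θ} = (∑_{k∈ℤ^d} |f̂(k)|^θ)^{1/θ} ≤ ‖f‖_{𝐁^{1/θ−1/2}_{p,θ}}. -/

import Mathlib

open MeasureTheory Real ENNReal

noncomputable section

/-- Normalized Lebesgue measure on the unit cube `[0,1]^d`, modelling the torus `𝕋^d`. -/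
def unitCube (d : ℕ) : Measure (Fin d → ℝ) :=
  volume.restrict (Set.univ.pi fun _ => Set.Icc (0 : ℝ) 1)

/-- The complex exponential `exp(2πi k·x)`. -/
def trigChar {d : ℕ} (k : Fin d → ℤ) (x : Fin d → ℝ) : ℂ :=
  Complex.exp (2 * (Real.pi : ℂ) * Complex.I * ∑ j, (k j : ℂ) * (x j : ℂ))

/-- The `k`-th Fourier coefficient of `f`. -/
def fourierCoef {d : ℕ} (f : (Fin d → ℝ) → ℂ) (k : Fin d → ℤ) : ℂ :=
  ∫ x, f x * Complex.exp (-(2 * (Real.pi : ℂ) * Complex.I) * ∑ j, (k j : ℂ) * (x j : ℂ))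
    ∂(unitCube d)

/-- The Wiener quasi-norm `‖f‖_{𝒜_θ}`, valued in `ℝ≥0∞`. -/
def wienerNorm {d : ℕ} (θ : ℝ) (f : (Fin d → ℝ) → ℂ) : ℝ≥0∞ :=
  (∑' k : Fin d → ℤ, (‖fourierCoef f k‖₊ : ℝ≥0∞) ^ θ) ^ (1 / θ)

/-- Dyadic block `I_0 = {0}`, `I_n = {k : 2^{n-1} ≤ |k| < 2^n}`. -/
def blockZ : ℕ → Finset ℤ
  | 0 => {0}
  | n + 1 => Finset.Icc (-(2 ^ (n + 1) - 1) : ℤ) (2 ^ (n + 1) - 1) \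
      Finset.Icc (-(2 ^ n - 1) : ℤ) (2 ^ n - 1)

/-- Dyadic block `I_l = I_{l_1} × ⋯ × I_{l_d} ⊆ ℤ^d`. -/
def blockD (d : ℕ) (l : Fin d → ℕ) : Finset (Fin d → ℤ) :=
  Fintype.piFinset fun j => blockZ (l j)

/-- The dyadic block projection `∑_{k ∈ I_l} f̂(k) e^{2πi k·x}`. -/
def blockProj {d : ℕ} (f : (Fin d → ℝ) → ℂ) (l : Fin d → ℕ) : (Fin d → ℝ) → ℂ :=
  fun x => ∑ k ∈ blockD d l, fourierCoef f k * trigChar k x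

/-- The quasi-norm of the Besov space `𝐁^r_{p,θ}` of dominating mixed smoothness. -/
def besovNorm (d : ℕ) (p θ r : ℝ) (f : (Fin d → ℝ) → ℂ) : ℝ≥0∞ :=
  (∑' l : Fin d → ℕ, ENNReal.ofReal ((2 : ℝ) ^ ((∑ j, (l j : ℝ)) * r * θ)) *
      eLpNorm (blockProj f l) (ENNReal.ofReal p) (unitCube d) ^ θ) ^ (1 / θ)

/-! ### Auxiliary lemmas -/

/-- Index of the dyadic block containing `k`. -/
def idxZ (k : ℤ) : ℕ := if k = 0 then 0 else Nat.log 2 k.natAbs + 1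

lemma mem_blockZ_iff (k : ℤ) (n : ℕ) : k ∈ blockZ n ↔ idxZ k = n := by
  cases n with
  | zero =>
    simp only [blockZ, Finset.mem_singleton, idxZ]
    constructor
    · rintro rfl; simp
    · intro h; by_contra hk; simp [hk] at h
  | succ n =>
    have hc : ((2:ℤ) ^ n) = ((2 ^ n : ℕ) : ℤ) := by push_cast; ring
    have hc1 : ((2:ℤ) ^ (n+1)) = ((2 ^ (n+1) : ℕ) : ℤ) := by push_cast; ring
    have h1 : k ∈ blockZ (n+1) ↔ 2^n ≤ k.natAbs ∧ k.natAbs < 2^(n+1) := by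
      simp only [blockZ, Finset.mem_sdiff, Finset.mem_Icc, not_and, not_le]
      rw [hc, hc1]
      have : (2:ℕ) ^ (n+1) = 2 * 2^n := by ring
      rw [this]
      have hp : 0 < 2^n := Nat.pow_pos (by norm_num)
      omega
    rw [h1]
    constructor
    · rintro ⟨hlo, hhi⟩
      have hp : 0 < 2^n := Nat.pow_pos (by norm_num)
      have hk : k ≠ 0 := by intro h; subst h; omega
      simp only [idxZ, if_neg hk, Nat.add_right_cancel_iff]
      exact Nat.log_eq_of_pow_le_of_lt_pow hlo hhi
    · intro h
      have hk : k ≠ 0 := by intro hk0; subst hk0; simp [idxZ] at h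
      simp only [idxZ, if_neg hk, Nat.add_right_cancel_iff] at h
      subst h
      have hpos : 0 < k.natAbs := Int.natAbs_pos.mpr hk
      exact ⟨Nat.pow_log_le_self 2 hpos.ne', Nat.lt_pow_succ_log_self (by norm_num) _⟩

lemma card_blockZ (n : ℕ) : (blockZ n).card ≤ 2 ^ n := by
  cases n with
  | zero => simp [blockZ]
  | succ n =>
    have hp : (0:ℤ) < 2^n := by positivity
    have hsub : Finset.Icc (-(2 ^ n - 1) : ℤ) (2 ^ n - 1) ⊆
        Finset.Icc (-(2 ^ (n+1) - 1) : ℤ) (2 ^ (n+1) - 1) := by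
      apply Finset.Icc_subset_Icc
      · have : (2:ℤ)^n ≤ 2^(n+1) := by
          apply pow_le_pow_right₀ <;> omega
        omega
      · have : (2:ℤ)^n ≤ 2^(n+1) := by
          apply pow_le_pow_right₀ <;> omega
        omega
    rw [blockZ, Finset.card_sdiff_of_subset hsub, Int.card_Icc, Int.card_Icc]
    have hc : ((2:ℤ) ^ n) = ((2 ^ n : ℕ) : ℤ) := by push_cast; ring
    have hc1 : ((2:ℤ) ^ (n+1)) = ((2 ^ (n+1) : ℕ) : ℤ) := by push_cast; ring
    rw [hc, hc1]
    have : (2:ℕ) ^ (n+1) = 2 * 2^n := by ring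
    rw [this]
    have hp' : 0 < 2^n := Nat.pow_pos (by norm_num)
    omega

lemma mem_blockD_iff {d : ℕ} (k : Fin d → ℤ) (l : Fin d → ℕ) :
    k ∈ blockD d l ↔ (fun j => idxZ (k j)) = l := by
  rw [blockD, Fintype.mem_piFinset, funext_iff]
  exact forall_congr' fun j => mem_blockZ_iff (k j) (l j)

lemma card_blockD {d : ℕ} (l : Fin d → ℕ) :
    ((blockD d l).card : ℝ≥0∞) ≤ 2 ^ (∑ j, l j) := by
  rw [blockD, Fintype.card_piFinset]
  calc ((∏ j, (blockZ (l j)).card : ℕ) : ℝ≥0∞) ≤ ((∏ j, 2 ^ (l j) : ℕ) : ℝ≥0∞) := by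
        exact Nat.cast_le.mpr (Finset.prod_le_prod' fun j _ => card_blockZ (l j))
    _ = 2 ^ (∑ j, l j) := by
        push_cast
        rw [Finset.prod_pow_eq_pow_sum]

lemma tsum_block {d : ℕ} (F : (Fin d → ℤ) → ℝ≥0∞) :
    ∑' k, F k = ∑' l : Fin d → ℕ, ∑ k ∈ blockD d l, F k := by
  rw [← ENNReal.tsum_fiberwise F (fun k j => idxZ (k j))]
  refine tsum_congr fun l => ?_
  have hset : ((fun (k : Fin d → ℤ) (j : Fin d) => idxZ (k j)) ⁻¹' {l}) = ↑(blockD d l) := by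
    ext k
    simp [mem_blockD_iff]
  rw [hset]
  exact tsum_subtype (↑(blockD d l) : Set (Fin d → ℤ)) F ▸ (Finset.tsum_subtype (blockD d l) F)

lemma integral_char1 (n : ℤ) :
    ∫ t in Set.Icc (0:ℝ) 1, Complex.exp (2 * (Real.pi:ℂ) * Complex.I * (n * t)) =
      if n = 0 then 1 else 0 := by
  rw [integral_Icc_eq_integral_Ioc, ← intervalIntegral.integral_of_le (by norm_num : (0:ℝ) ≤ 1)]
  by_cases hn : n = 0
  · simp [hn]
  · rw [if_neg hn]
    have hc : (2 * (Real.pi:ℂ) * Complex.I * n) ≠ 0 := by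
      simp [Real.pi_ne_zero, Complex.I_ne_zero, hn]
    have : ∀ t : ℝ, 2 * (Real.pi:ℂ) * Complex.I * (n * t) =
        (2 * (Real.pi:ℂ) * Complex.I * n) * t := by intro t; ring
    simp_rw [this]
    rw [integral_exp_mul_complex hc]
    have : Complex.exp (2 * (Real.pi:ℂ) * Complex.I * n * 1) = 1 := by
      rw [mul_one]
      have : 2 * (Real.pi:ℂ) * Complex.I * n = n * (2 * Real.pi * Complex.I) := by ring
      rw [this, Complex.exp_int_mul_two_pi_mul_I]
    rw [mul_one] at this
    simp only [Complex.ofReal_one, Complex.ofReal_zero, mul_one, mul_zero, Complex.exp_zero]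
    rw [this, sub_self, zero_div]

/-- Integral over the cube of a product of coordinate functions. -/
lemma integral_unitCube_prod {d : ℕ} (g : Fin d → ℝ → ℂ) :
    ∫ x, (∏ j, g j (x j)) ∂(unitCube d) = ∏ j, ∫ t in Set.Icc (0:ℝ) 1, g j t := by
  have hS : MeasurableSet (Set.univ.pi fun _ : Fin d => Set.Icc (0 : ℝ) 1) :=
    MeasurableSet.univ_pi fun _ => measurableSet_Icc
  rw [unitCube, ← integral_indicator hS]
  have hpt : ∀ x : Fin d → ℝ,
      (Set.univ.pi fun _ : Fin d => Set.Icc (0:ℝ) 1).indicator (fun x => ∏ j, g j (x j)) x =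
      ∏ j, (Set.Icc (0:ℝ) 1).indicator (g j) (x j) := by
    intro x
    by_cases hx : x ∈ Set.univ.pi fun _ : Fin d => Set.Icc (0:ℝ) 1
    · rw [Set.indicator_of_mem hx]
      refine Finset.prod_congr rfl fun j _ => ?_
      rw [Set.indicator_of_mem (hx j (Set.mem_univ j))]
    · rw [Set.indicator_of_notMem hx]
      rw [Set.mem_pi] at hx
      push_neg at hx
      obtain ⟨j, _, hj⟩ := hx
      exact (Finset.prod_eq_zero (Finset.mem_univ j) (Set.indicator_of_notMem hj _)).symm
  simp_rw [hpt]
  rw [volume_pi, MeasureTheory.integral_fintype_prod_eq_prod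
    (f := fun j t => (Set.Icc (0:ℝ) 1).indicator (g j) t)]
  refine Finset.prod_congr rfl fun j _ => ?_
  rw [integral_indicator measurableSet_Icc]

lemma conj_trigChar {d : ℕ} (m : Fin d → ℤ) (x : Fin d → ℝ) :
    (starRingEnd ℂ) (trigChar m x) =
      Complex.exp (-(2 * (Real.pi : ℂ) * Complex.I) * ∑ j, (m j : ℂ) * (x j : ℂ)) := by
  rw [trigChar, ← Complex.exp_conj]
  congr 1
  rw [map_mul, map_sum]
  simp only [map_mul, Complex.conj_I, Complex.conj_ofReal, map_ofNat, map_intCast]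
  ring

lemma trigChar_orth {d : ℕ} (k m : Fin d → ℤ) :
    ∫ x, trigChar k x * (starRingEnd ℂ) (trigChar m x) ∂(unitCube d) =
      if k = m then 1 else 0 := by
  have hpt : ∀ x : Fin d → ℝ, trigChar k x * (starRingEnd ℂ) (trigChar m x) =
      ∏ j, Complex.exp (2 * (Real.pi:ℂ) * Complex.I *
        (((k j - m j : ℤ) : ℂ) * ((x j : ℝ) : ℂ))) := by
    intro x
    rw [conj_trigChar, trigChar, ← Complex.exp_sum, ← Complex.exp_add]
    congr 1
    push_cast
    rw [Finset.mul_sum, Finset.mul_sum, ← Finset.sum_add_distrib]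
    exact Finset.sum_congr rfl fun j _ => by ring
  simp_rw [hpt]
  rw [integral_unitCube_prod
    (fun j t => Complex.exp (2 * (Real.pi:ℂ) * Complex.I * (((k j - m j : ℤ) : ℂ) * (t:ℂ))))]
  simp_rw [integral_char1]
  by_cases h : k = m
  · subst h; simp
  · rw [if_neg h]
    obtain ⟨j, hj⟩ := Function.ne_iff.mp h
    exact Finset.prod_eq_zero (Finset.mem_univ j) (by rw [if_neg (sub_ne_zero.mpr hj)])

lemma isCompact_cube (d : ℕ) : IsCompact (Set.univ.pi fun _ : Fin d => Set.Icc (0:ℝ) 1) :=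
  isCompact_univ_pi fun _ => isCompact_Icc

instance unitCube_prob (d : ℕ) : IsProbabilityMeasure (unitCube d) := by
  constructor
  rw [unitCube, Measure.restrict_apply_univ, volume_pi_pi]
  simp

lemma continuous_trigChar {d : ℕ} (k : Fin d → ℤ) : Continuous (trigChar k) := by
  apply Complex.continuous_exp.comp
  exact continuous_const.mul (continuous_finset_sum _ fun j _ =>
    continuous_const.mul ((Complex.continuous_ofReal.comp (continuous_apply j))))

lemma integrable_unitCube {d : ℕ} {E : Type*} [NormedAddCommGroup E]
    {g : (Fin d → ℝ) → E} (hg : Continuous g) :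
    Integrable g (unitCube d) :=
  hg.continuousOn.integrableOn_compact (isCompact_cube d)

/-- Parseval for trigonometric polynomials. -/
lemma eLpNorm_trigPoly {d : ℕ} (S : Finset (Fin d → ℤ)) (c : (Fin d → ℤ) → ℂ) :
    eLpNorm (fun x => ∑ k ∈ S, c k * trigChar k x) 2 (unitCube d) ^ (2:ℝ) =
      ∑ k ∈ S, (‖c k‖₊ : ℝ≥0∞) ^ (2:ℝ) := by
  set g : (Fin d → ℝ) → ℂ := fun x => ∑ k ∈ S, c k * trigChar k x with hgdef
  have hgc : Continuous g := continuous_finset_sum _ fun k _ =>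
    continuous_const.mul (continuous_trigChar k)
  have key : ∫ x, g x * (starRingEnd ℂ) (g x) ∂(unitCube d) = ∑ k ∈ S, (‖c k‖:ℂ)^2 := by
    have hexp : ∀ x, g x * (starRingEnd ℂ) (g x) =
        ∑ k ∈ S, ∑ m ∈ S, (c k * (starRingEnd ℂ) (c m)) *
          (trigChar k x * (starRingEnd ℂ) (trigChar m x)) := by
      intro x
      rw [hgdef]
      simp only [map_sum, map_mul, Finset.sum_mul_sum]
      exact Finset.sum_congr rfl fun k _ => Finset.sum_congr rfl fun m _ => by ring
    have hint : ∀ (k m : Fin d → ℤ), Integrable (fun x => c k * (starRingEnd ℂ) (c m) *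
        (trigChar k x * (starRingEnd ℂ) (trigChar m x))) (unitCube d) := fun k m =>
      integrable_unitCube (by
        apply Continuous.mul continuous_const
        exact (continuous_trigChar _).mul (Complex.continuous_conj.comp (continuous_trigChar _)))
    simp_rw [hexp]
    rw [integral_finset_sum _ fun k _ => integrable_finset_sum _ fun m _ => hint k m]
    have : ∀ k ∈ S, (∫ x, ∑ m ∈ S, (c k * (starRingEnd ℂ) (c m)) *
          (trigChar k x * (starRingEnd ℂ) (trigChar m x)) ∂(unitCube d)) = (‖c k‖:ℂ)^2 := by
      intro k hk
      rw [integral_finset_sum _ fun m _ => hint k m]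
      have : ∀ m ∈ S, (∫ x, (c k * (starRingEnd ℂ) (c m)) *
            (trigChar k x * (starRingEnd ℂ) (trigChar m x)) ∂(unitCube d)) =
          if k = m then (‖c k‖:ℂ)^2 else 0 := by
        intro m _
        rw [MeasureTheory.integral_const_mul, trigChar_orth]
        by_cases h : k = m
        · subst h
          rw [if_pos rfl, if_pos rfl, mul_one, Complex.mul_conj]
          rw [Complex.normSq_eq_norm_sq]
          push_cast
          norm_cast
        · rw [if_neg h, if_neg h, mul_zero]
      rw [Finset.sum_congr rfl this, Finset.sum_ite_eq S k (fun _ => (‖c k‖:ℂ)^2), if_pos hk]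
    rw [Finset.sum_congr rfl this]
  have hnn : ∀ x, ((‖g x‖₊ : ℝ≥0∞)) ^ (2:ℝ) = ENNReal.ofReal (‖g x‖^2) := by
    intro x
    rw [ENNReal.ofReal_pow (norm_nonneg _), ofReal_norm, enorm_eq_nnnorm, ENNReal.rpow_two]
  have hre : ∫ x, ‖g x‖^2 ∂(unitCube d) = ∑ k ∈ S, ‖c k‖^2 := by
    have hpt : ∀ x : Fin d → ℝ, (‖g x‖:ℝ)^2 = RCLike.re (g x * (starRingEnd ℂ) (g x)) := by
      intro x
      rw [RCLike.re_to_complex, Complex.mul_conj, Complex.normSq_eq_norm_sq]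
      norm_cast
    simp_rw [hpt]
    have hintg : Integrable (fun x => g x * (starRingEnd ℂ) (g x)) (unitCube d) :=
      integrable_unitCube (by exact hgc.mul (Complex.continuous_conj.comp hgc))
    rw [integral_re hintg, key, RCLike.re_to_complex, Complex.re_sum]
    refine Finset.sum_congr rfl fun k _ => ?_
    norm_cast
  have hlin : ∫⁻ x, ((‖g x‖₊ : ℝ≥0∞)) ^ (2:ℝ) ∂(unitCube d) =
      ENNReal.ofReal (∑ k ∈ S, ‖c k‖^2) := by
    simp_rw [hnn]
    rw [← ofReal_integral_eq_lintegral_ofReal (f := fun x => ‖g x‖^2)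
      (integrable_unitCube ((hgc.norm).pow 2)) (ae_of_all _ fun x => sq_nonneg _), hre]
  rw [eLpNorm_eq_lintegral_rpow_enorm_toReal (by norm_num) (by norm_num)]
  simp only [enorm_eq_nnnorm]
  have ht : (2 : ℝ≥0∞).toReal = (2:ℝ) := by norm_num
  rw [ht, ← ENNReal.rpow_mul, one_div, inv_mul_cancel₀ (by norm_num : (2:ℝ) ≠ 0),
    ENNReal.rpow_one, hlin, ENNReal.ofReal_sum_of_nonneg (fun k _ => sq_nonneg _)]
  refine Finset.sum_congr rfl fun k _ => ?_
  rw [ENNReal.ofReal_pow (norm_nonneg _), ofReal_norm, enorm_eq_nnnorm, ENNReal.rpow_two]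

lemma holder_finset {ι : Type*} (S : Finset ι) (a : ι → ℝ≥0∞) {θ : ℝ}
    (hθ1 : 0 < θ) (hθ2 : θ ≤ 1) :
    ∑ k ∈ S, a k ^ θ ≤ (S.card : ℝ≥0∞) ^ ((1:ℝ) - θ/2) * (∑ k ∈ S, a k ^ (2:ℝ)) ^ (θ/2) := by
  have hθ : θ ≠ 0 := hθ1.ne'
  have hp : (1:ℝ) ≤ 2/θ := by rw [le_div_iff₀ hθ1]; linarith
  have h1 := ENNReal.rpow_sum_le_const_mul_sum_rpow S (fun k => a k ^ θ) hp
  have h2 : ∀ k, (a k ^ θ) ^ (2/θ) = a k ^ (2:ℝ) := by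
    intro k
    rw [← ENNReal.rpow_mul]
    congr 1
    field_simp
  simp_rw [h2] at h1
  have h3 : ∑ k ∈ S, a k ^ θ = ((∑ k ∈ S, a k ^ θ) ^ (2/θ)) ^ (θ/2) := by
    rw [← ENNReal.rpow_mul]
    rw [show (2/θ) * (θ/2) = 1 by field_simp]
    rw [ENNReal.rpow_one]
  rw [h3]
  calc ((∑ k ∈ S, a k ^ θ) ^ (2/θ)) ^ (θ/2)
      ≤ ((S.card : ℝ≥0∞) ^ (2/θ - 1) * ∑ k ∈ S, a k ^ (2:ℝ)) ^ (θ/2) :=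
        ENNReal.rpow_le_rpow h1 (by positivity)
    _ = (S.card : ℝ≥0∞) ^ ((1:ℝ) - θ/2) * (∑ k ∈ S, a k ^ (2:ℝ)) ^ (θ/2) := by
        rw [ENNReal.mul_rpow_of_nonneg _ _ (by positivity), ← ENNReal.rpow_mul]
        congr 2
        field_simp

/-- Embedding of the Besov space of dominating mixed smoothness `𝐁^{1/θ-1/2}_{p,θ}` into the
Wiener space `𝒜_θ` with embedding constant `1`, independently of the dimension:
`‖f‖_{𝒜_θ} ≤ ‖f‖_{𝐁^{1/θ-1/2}_{p,θ}}` for `2 ≤ p < ∞` and `0 < θ ≤ 1`. -/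
theorem besov_embeds_wiener (d : ℕ) (p θ : ℝ) (hp : 2 ≤ p) (hθ1 : 0 < θ) (hθ2 : θ ≤ 1)
    (f : (Fin d → ℝ) → ℂ) (hf : MemLp f (ENNReal.ofReal p) (unitCube d)) :
    wienerNorm θ f ≤ besovNorm d p θ (1 / θ - 1 / 2) f := by
  rw [wienerNorm, besovNorm]
  refine ENNReal.rpow_le_rpow ?_ (by positivity)
  rw [tsum_block]
  refine ENNReal.tsum_le_tsum fun l => ?_
  -- per-block bound
  set S := blockD d l
  set a : (Fin d → ℤ) → ℝ≥0∞ := fun k => (‖fourierCoef f k‖₊ : ℝ≥0∞)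
  have hp2 : (2 : ℝ≥0∞) ≤ ENNReal.ofReal p := by
    calc (2:ℝ≥0∞) = ENNReal.ofReal 2 := by norm_num
    _ ≤ ENNReal.ofReal p := ENNReal.ofReal_le_ofReal hp
  have hproj_cont : Continuous (blockProj f l) := continuous_finset_sum _ fun k _ =>
    continuous_const.mul (continuous_trigChar k)
  have hL2 : (∑ k ∈ S, a k ^ (2:ℝ)) ^ (θ/2) =
      eLpNorm (blockProj f l) 2 (unitCube d) ^ θ := by
    rw [← eLpNorm_trigPoly S (fun k => fourierCoef f k), ← ENNReal.rpow_mul,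
      show (2:ℝ) * (θ/2) = θ by ring]
    rfl
  have hmono : eLpNorm (blockProj f l) 2 (unitCube d) ^ θ ≤
      eLpNorm (blockProj f l) (ENNReal.ofReal p) (unitCube d) ^ θ :=
    ENNReal.rpow_le_rpow
      (eLpNorm_le_eLpNorm_of_exponent_le hp2 hproj_cont.aestronglyMeasurable) hθ1.le
  have hcard : ((S.card : ℝ≥0∞)) ^ ((1:ℝ) - θ/2) ≤
      ENNReal.ofReal ((2 : ℝ) ^ ((∑ j, (l j : ℝ)) * (1/θ - 1/2) * θ)) := by
    have h1 : ((S.card : ℝ≥0∞)) ^ ((1:ℝ) - θ/2) ≤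
        ((2:ℝ≥0∞) ^ (∑ j, l j)) ^ ((1:ℝ) - θ/2) :=
      ENNReal.rpow_le_rpow (card_blockD l) (by linarith)
    refine h1.trans (le_of_eq ?_)
    have hco : ENNReal.ofReal ((2 : ℝ) ^ ((∑ j, (l j : ℝ)) * (1/θ - 1/2) * θ)) =
        (2:ℝ≥0∞) ^ ((∑ j, (l j : ℝ)) * (1/θ - 1/2) * θ) := by
      rw [← ENNReal.ofReal_rpow_of_pos (by norm_num : (0:ℝ) < 2)]
      norm_num
    rw [hco, ← ENNReal.rpow_natCast 2 (∑ j, l j), ← ENNReal.rpow_mul]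
    congr 1
    push_cast
    have hθ : θ ≠ 0 := hθ1.ne'
    field_simp
  calc ∑ k ∈ S, a k ^ θ
      ≤ (S.card : ℝ≥0∞) ^ ((1:ℝ) - θ/2) * (∑ k ∈ S, a k ^ (2:ℝ)) ^ (θ/2) :=
        holder_finset S a hθ1 hθ2
    _ ≤ ENNReal.ofReal ((2 : ℝ) ^ ((∑ j, (l j : ℝ)) * (1/θ - 1/2) * θ)) *
        eLpNorm (blockProj f l) (ENNReal.ofReal p) (unitCube d) ^ θ := by
        rw [hL2]
        exact mul_le_mul' hcard hmono
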